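/- arXiv:1603.09309 — 2 statements merged into one kernel-verified Lean document; each statement's English description precedes it below -/
import Mathlib

section
/- Let D ≥ 2, let a_1, …, a_D ∈ 𝔻 with a_1 = 0, and let β be the normalized Blaschke product β(z) = ∏_{k=1}^D ((1 − conj(a_k))/(1 − a_k)) · (z − a_k)/(1 − conj(a_k) z), so that β(0) = 0 and β(1) = 1. If θ ∈ ℝ satisfies β(e^{2πiθ} z) = e^{2πiθ} β(z) for all z ∈ 𝔻, then (D − 1)θ ∈ ℤ. If instead θ ∈ ℝ satisfies β(e^{2πiθ} z) = e^{−2πiθ} β(z) for all z ∈ 𝔻, then (D + 1)θ ∈ ℤ. -/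
open Finset Complex

section BlaschkeAux

open Polynomial ComplexConjugate

private lemma ball_infinite : (Metric.ball (0:ℂ) 1).Infinite := by
  apply Set.infinite_of_injective_forall_mem (f := fun n : ℕ => ((((n:ℝ)+2)⁻¹ : ℝ) : ℂ))
  · intro i j hij
    simp only [Complex.ofReal_inj] at hij
    have hi : ((i:ℝ)+2) ≠ 0 := by positivity
    have hj : ((j:ℝ)+2) ≠ 0 := by positivity
    field_simp at hij
    exact Nat.add_right_cancel (by exact_mod_cast hij.symm : i + 2 = j + 2)
  · intro n
    rw [Metric.mem_ball, dist_zero_right, Complex.norm_real, Real.norm_eq_abs,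
      abs_of_pos (by positivity)]
    rw [inv_lt_one_iff₀]
    right
    have : (0:ℝ) ≤ (n:ℝ) := Nat.cast_nonneg n
    linarith

private lemma key (D : ℕ) (a : Fin D → ℂ) (ha : ∀ k, ‖a k‖ < 1)
    (β : ℂ → ℂ)
    (hβ : ∀ z : ℂ, β z = ∏ k,
      ((1 - (starRingEnd ℂ) (a k)) / (1 - a k)) *
        ((z - a k) / (1 - (starRingEnd ℂ) (a k) * z)))
    (ω ε : ℂ) (hω : ‖ω‖ = 1) (hε : ε ≠ 0)
    (h : ∀ z ∈ Metric.ball (0:ℂ) 1, β (ω * z) = ε * β z) :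
    ω ^ D = ε := by
  classical
  have hω0 : ω ≠ 0 := by
    intro h0; rw [h0] at hω; simp at hω
  set N : Finset (Fin D) := univ.filter (fun k => a k ≠ 0) with hN
  set m : ℕ := (univ.filter (fun k => a k = 0)).card with hm
  set e : ℕ := N.card with he
  have hme : m + e = D := by
    rw [hm, he, hN]
    simpa using Finset.card_filter_add_card_filter_not
      (s := (univ : Finset (Fin D))) (p := fun k => a k = 0)
  have hne1 : ∀ w : ℂ, ‖w‖ < 1 → 1 - w ≠ 0 := by
    intro w hw h0
    have : w = 1 := by linear_combination -h0
    rw [this] at hw; simp at hw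
  have hden : ∀ (k : Fin D) (z : ℂ), ‖z‖ < 1 →
      1 - (starRingEnd ℂ) (a k) * z ≠ 0 := by
    intro k z hz
    apply hne1
    rw [norm_mul, Complex.norm_conj]
    have h1 := ha k
    have h2 := norm_nonneg (a k)
    have h3 := norm_nonneg z
    nlinarith
  -- the normalizing constant
  have hC : (∏ k ∈ N, ((1 - (starRingEnd ℂ) (a k)) / (1 - a k))) ≠ 0 := by
    rw [Finset.prod_ne_zero_iff]
    intro k _
    exact div_ne_zero (hne1 _ (by rw [Complex.norm_conj]; exact ha k)) (hne1 _ (ha k))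
  -- step 1 : product formula on the ball
  have hprod : ∀ z : ℂ, ‖z‖ < 1 →
      β z * ∏ k ∈ N, (1 - (starRingEnd ℂ) (a k) * z)
        = (∏ k ∈ N, ((1 - (starRingEnd ℂ) (a k)) / (1 - a k)))
            * (z ^ m * ∏ k ∈ N, (z - a k)) := by
    intro z hz
    rw [hβ z, ← Finset.prod_filter_mul_prod_filter_not univ (fun k => a k = 0)]
    have h1 : ∏ k ∈ univ.filter (fun k => a k = 0),
        (((1 - (starRingEnd ℂ) (a k)) / (1 - a k))
          * ((z - a k) / (1 - (starRingEnd ℂ) (a k) * z))) = z ^ m := by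
      rw [hm, ← Finset.prod_const]
      refine Finset.prod_congr rfl (fun k hk => ?_)
      have hk0 : a k = 0 := (Finset.mem_filter.mp hk).2
      simp [hk0]
    rw [h1]
    have h2 : ∀ k ∈ N,
        (((1 - (starRingEnd ℂ) (a k)) / (1 - a k))
            * ((z - a k) / (1 - (starRingEnd ℂ) (a k) * z)))
          * (1 - (starRingEnd ℂ) (a k) * z)
        = ((1 - (starRingEnd ℂ) (a k)) / (1 - a k)) * (z - a k) := by
      intro k _
      rw [mul_assoc, div_mul_cancel₀ _ (hden k z hz)]
    calc (z ^ m * ∏ k ∈ N,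
          (((1 - (starRingEnd ℂ) (a k)) / (1 - a k))
            * ((z - a k) / (1 - (starRingEnd ℂ) (a k) * z))))
        * ∏ k ∈ N, (1 - (starRingEnd ℂ) (a k) * z)
        = z ^ m * ∏ k ∈ N,
          ((((1 - (starRingEnd ℂ) (a k)) / (1 - a k))
            * ((z - a k) / (1 - (starRingEnd ℂ) (a k) * z)))
          * (1 - (starRingEnd ℂ) (a k) * z)) := by
          rw [mul_assoc, ← Finset.prod_mul_distrib]
      _ = z ^ m * ∏ k ∈ N, (((1 - (starRingEnd ℂ) (a k)) / (1 - a k)) * (z - a k)) := by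
          rw [Finset.prod_congr rfl h2]
      _ = z ^ m * ((∏ k ∈ N, ((1 - (starRingEnd ℂ) (a k)) / (1 - a k)))
            * ∏ k ∈ N, (z - a k)) := by rw [Finset.prod_mul_distrib]
      _ = (∏ k ∈ N, ((1 - (starRingEnd ℂ) (a k)) / (1 - a k)))
            * (z ^ m * ∏ k ∈ N, (z - a k)) := by ring
  -- step 2 : pointwise identity on the ball
  have hpt : ∀ z : ℂ, ‖z‖ < 1 →
      ((ω*z) ^ m * ∏ k ∈ N, (ω*z - a k)) * ∏ k ∈ N, (1 - (starRingEnd ℂ) (a k) * z)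
        = ε * ((z ^ m * ∏ k ∈ N, (z - a k))
            * ∏ k ∈ N, (1 - (starRingEnd ℂ) (a k) * ω * z)) := by
    intro z hz
    have hz' : ‖ω*z‖ < 1 := by rw [norm_mul, hω, one_mul]; exact hz
    have e1 := hprod z hz
    have e2 := hprod (ω*z) hz'
    have e3 : β (ω*z) = ε * β z := by
      apply h z
      rw [Metric.mem_ball, dist_zero_right]
      exact hz
    have hQassoc : ∏ k ∈ N, (1 - (starRingEnd ℂ) (a k) * (ω*z))
        = ∏ k ∈ N, (1 - (starRingEnd ℂ) (a k) * ω * z) :=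
      Finset.prod_congr rfl (fun k _ => by ring)
    rw [hQassoc] at e2
    apply mul_left_cancel₀ hC
    calc (∏ k ∈ N, ((1 - (starRingEnd ℂ) (a k)) / (1 - a k)))
          * (((ω*z) ^ m * ∏ k ∈ N, (ω*z - a k))
            * ∏ k ∈ N, (1 - (starRingEnd ℂ) (a k) * z))
        = (β (ω*z) * ∏ k ∈ N, (1 - (starRingEnd ℂ) (a k) * ω * z))
            * ∏ k ∈ N, (1 - (starRingEnd ℂ) (a k) * z) := by rw [e2]; ring
      _ = (ε * β z * ∏ k ∈ N, (1 - (starRingEnd ℂ) (a k) * ω * z))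
            * ∏ k ∈ N, (1 - (starRingEnd ℂ) (a k) * z) := by rw [e3]
      _ = ε * ((β z * ∏ k ∈ N, (1 - (starRingEnd ℂ) (a k) * z))
            * ∏ k ∈ N, (1 - (starRingEnd ℂ) (a k) * ω * z)) := by ring
      _ = ε * (((∏ k ∈ N, ((1 - (starRingEnd ℂ) (a k)) / (1 - a k)))
              * (z ^ m * ∏ k ∈ N, (z - a k)))
            * ∏ k ∈ N, (1 - (starRingEnd ℂ) (a k) * ω * z)) := by rw [e1]
      _ = (∏ k ∈ N, ((1 - (starRingEnd ℂ) (a k)) / (1 - a k)))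
          * (ε * ((z ^ m * ∏ k ∈ N, (z - a k))
            * ∏ k ∈ N, (1 - (starRingEnd ℂ) (a k) * ω * z))) := by ring
  -- auxiliary product identity
  have hRe : ∀ z : ℂ, ω ^ e * ∏ k ∈ N, (z - a k / ω) = ∏ k ∈ N, (ω*z - a k) := by
    intro z
    rw [he, ← Finset.prod_const, ← Finset.prod_mul_distrib]
    refine Finset.prod_congr rfl (fun k _ => ?_)
    rw [mul_sub, mul_div_cancel₀ _ hω0]
  -- step 3 : polynomial identity
  set R : Polynomial ℂ := ∏ k ∈ N, (X - C (a k)) with hR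
  set R' : Polynomial ℂ := ∏ k ∈ N, (X - C (a k / ω)) with hR'
  set Qp : Polynomial ℂ := ∏ k ∈ N, (1 - C ((starRingEnd ℂ) (a k)) * X) with hQp
  set Q' : Polynomial ℂ := ∏ k ∈ N, (1 - C ((starRingEnd ℂ) (a k) * ω) * X) with hQ'
  have hpoly : C (ω ^ (m + e)) * (R' * Qp) = C ε * (R * Q') := by
    have hzero : (X ^ m * (C (ω ^ (m+e)) * (R' * Qp))
        - X ^ m * (C ε * (R * Q')) : Polynomial ℂ) = 0 := by
      apply Polynomial.eq_zero_of_infinite_isRoot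
      apply Set.Infinite.mono (s := Metric.ball (0:ℂ) 1) ?_ ball_infinite
      intro z hz
      have hz1 : ‖z‖ < 1 := by
        rw [Metric.mem_ball, dist_zero_right] at hz; exact hz
      simp only [Set.mem_setOf_eq, IsRoot, eval_sub, eval_mul, eval_pow, eval_X, eval_C,
        hR, hR', hQp, hQ', eval_prod, eval_sub, eval_one, eval_mul, eval_C, eval_X]
      have h1 := hpt z hz1
      have h2 := hRe z
      linear_combination (z ^ m * ω ^ m * ∏ k ∈ N, (1 - (starRingEnd ℂ) (a k) * z)) * h2 + h1
    have := sub_eq_zero.mp hzero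
    exact mul_left_cancel₀ (pow_ne_zero m Polynomial.X_ne_zero) this
  -- step 5 : evaluate at 0
  have hπ : (∏ k ∈ N, a k) ≠ 0 := by
    rw [Finset.prod_ne_zero_iff]
    intro k hk
    rw [hN, Finset.mem_filter] at hk
    exact hk.2
  have hDe : ω ^ (m + e) = ε * ω ^ e := by
    have h0 := congrArg (Polynomial.eval 0) hpoly
    simp only [eval_mul, eval_C, hR, hR', hQp, hQ', eval_prod, eval_sub, eval_one,
      eval_mul, eval_C, eval_X, mul_zero, sub_zero, zero_sub, Finset.prod_const_one,
      mul_one] at h0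
    have hs1 : ∏ k ∈ N, -(a k / ω) = ((-1) ^ e * ∏ k ∈ N, a k) * (ω ^ e)⁻¹ := by
      rw [he, ← Finset.prod_const, ← inv_pow, ← Finset.prod_const, ← Finset.prod_mul_distrib,
        ← Finset.prod_mul_distrib]
      refine Finset.prod_congr rfl (fun k _ => ?_)
      rw [div_eq_mul_inv]; ring
    have hs2 : ∏ k ∈ N, -(a k) = (-1) ^ e * ∏ k ∈ N, a k := by
      rw [he, ← Finset.prod_const, ← Finset.prod_mul_distrib]
      refine Finset.prod_congr rfl (fun k _ => by ring)
    rw [hs1, hs2] at h0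
    have hπ2 : ((-1 : ℂ) ^ e * ∏ k ∈ N, a k) ≠ 0 :=
      mul_ne_zero (pow_ne_zero _ (by norm_num)) hπ
    have h1 : (ω ^ (m+e) * (ω ^ e)⁻¹) * ((-1) ^ e * ∏ k ∈ N, a k)
        = ε * ((-1) ^ e * ∏ k ∈ N, a k) := by linear_combination h0
    have h2 := mul_right_cancel₀ hπ2 h1
    rw [← h2, inv_mul_cancel_right₀ (pow_ne_zero e hω0)]
  -- step 6 : roots
  have hRne : R ≠ 0 := (monic_prod_of_monic _ _ (fun k _ => monic_X_sub_C _)).ne_zero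
  have hR'ne : R' ≠ 0 := (monic_prod_of_monic _ _ (fun k _ => monic_X_sub_C _)).ne_zero
  have hQpne : Qp ≠ 0 := by
    intro h0
    have : Qp.eval 0 = 1 := by
      simp [hQp, eval_prod]
    rw [h0] at this; simp at this
  have hQ'ne : Q' ≠ 0 := by
    intro h0
    have : Q'.eval 0 = 1 := by
      simp [hQ', eval_prod]
    rw [h0] at this; simp at this
  have hroots := congrArg Polynomial.roots hpoly
  rw [roots_C_mul _ (pow_ne_zero _ hω0), roots_C_mul _ hε,
    roots_mul (mul_ne_zero hR'ne hQpne), roots_mul (mul_ne_zero hRne hQ'ne)] at hroots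
  have hR'roots : R'.roots = N.val.map (fun k => a k / ω) := by
    have h1 : R' = (Multiset.map (fun x => X - C x) (N.val.map (fun k => a k / ω))).prod := by
      rw [hR', Finset.prod_eq_multiset_prod, Multiset.map_map]
      rfl
    rw [h1, roots_multiset_prod_X_sub_C]
  have hRroots : R.roots = N.val.map a := by
    have h1 : R = (Multiset.map (fun x => X - C x) (N.val.map a)).prod := by
      rw [hR, Finset.prod_eq_multiset_prod, Multiset.map_map]
      rfl
    rw [h1, roots_multiset_prod_X_sub_C]
  rw [hR'roots, hRroots] at hroots
  have hfil := congrArg (Multiset.filter (fun z => ‖z‖ < 1)) hroots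
  have hf1 : Multiset.filter (fun z => ‖z‖ < 1)
      (Multiset.map (fun k => a k / ω) N.val) = Multiset.map (fun k => a k / ω) N.val := by
    rw [Multiset.filter_eq_self]
    intro x hx
    obtain ⟨k, _, rfl⟩ := Multiset.mem_map.mp hx
    rw [norm_div, hω, div_one]
    exact ha k
  have hf2 : Multiset.filter (fun z => ‖z‖ < 1)
      (Multiset.map a N.val) = Multiset.map a N.val := by
    rw [Multiset.filter_eq_self]
    intro x hx
    obtain ⟨k, _, rfl⟩ := Multiset.mem_map.mp hx
    exact ha k
  have hf3 : Multiset.filter (fun z => ‖z‖ < 1) Qp.roots = 0 := by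
    rw [Multiset.filter_eq_nil]
    intro z hz hlt
    have hz' : Qp.eval z = 0 := (isRoot_of_mem_roots hz)
    rw [hQp] at hz'
    simp only [eval_prod, eval_sub, eval_one, eval_mul, eval_C, eval_X] at hz'
    obtain ⟨k, hk, hk0⟩ := Finset.prod_eq_zero_iff.mp hz'
    exact hden k z hlt hk0
  have hf4 : Multiset.filter (fun z => ‖z‖ < 1) Q'.roots = 0 := by
    rw [Multiset.filter_eq_nil]
    intro z hz hlt
    have hz' : Q'.eval z = 0 := (isRoot_of_mem_roots hz)
    rw [hQ'] at hz'
    simp only [eval_prod, eval_sub, eval_one, eval_mul, eval_C, eval_X] at hz'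
    obtain ⟨k, hk, hk0⟩ := Finset.prod_eq_zero_iff.mp hz'
    have hωz : ‖ω * z‖ < 1 := by rw [norm_mul, hω, one_mul]; exact hlt
    apply hden k (ω * z) hωz
    rw [← hk0]; ring
  rw [Multiset.filter_add, Multiset.filter_add, hf1, hf2, hf3, hf4,
    add_zero, add_zero] at hfil
  -- step 7 : conclude
  have hprodeq := congrArg Multiset.prod hfil
  rw [← Finset.prod_eq_multiset_prod, ← Finset.prod_eq_multiset_prod] at hprodeq
  have hs1 : ∏ k ∈ N, (a k / ω) = (∏ k ∈ N, a k) * (ω ^ e)⁻¹ := by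
    rw [he, ← inv_pow, ← Finset.prod_const, ← Finset.prod_mul_distrib]
    exact Finset.prod_congr rfl (fun k _ => div_eq_mul_inv _ _)
  rw [hs1] at hprodeq
  have hωe : (ω ^ e)⁻¹ = 1 := by
    have h1 : (∏ k ∈ N, a k) * (ω ^ e)⁻¹ = (∏ k ∈ N, a k) * 1 := by
      rw [mul_one]; exact hprodeq
    exact mul_left_cancel₀ hπ h1
  have hωe1 : ω ^ e = 1 := by rwa [inv_eq_one] at hωe
  rw [← hme, hDe, hωe1, mul_one]

end BlaschkeAux

/-- Let `D ≥ 2`, `a₁, …, a_D ∈ 𝔻` with `a₁ = 0`, and let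
`β(z) = ∏ₖ ((1 − conj aₖ)/(1 − aₖ)) · (z − aₖ)/(1 − conj(aₖ) z)` be the
normalized Blaschke product.  If `β(e^{2πiθ} z) = e^{2πiθ} β(z)` for all
`z ∈ 𝔻`, then `(D − 1)θ ∈ ℤ`; if `β(e^{2πiθ} z) = e^{−2πiθ} β(z)` for all
`z ∈ 𝔻`, then `(D + 1)θ ∈ ℤ`. -/
theorem blaschke_rotation_symmetry (D : ℕ) (hD : 2 ≤ D) (a : Fin D → ℂ)
    (ha : ∀ k, ‖a k‖ < 1) (ha0 : a ⟨0, by omega⟩ = 0)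
    (β : ℂ → ℂ)
    (hβ : ∀ z : ℂ, β z = ∏ k,
      ((1 - (starRingEnd ℂ) (a k)) / (1 - a k)) *
        ((z - a k) / (1 - (starRingEnd ℂ) (a k) * z)))
    (θ : ℝ) :
    ((∀ z ∈ Metric.ball (0 : ℂ) 1,
        β (Complex.exp (2 * Real.pi * Complex.I * θ) * z) =
          Complex.exp (2 * Real.pi * Complex.I * θ) * β z) →
      ∃ m : ℤ, ((D : ℝ) - 1) * θ = m) ∧
    ((∀ z ∈ Metric.ball (0 : ℂ) 1,
        β (Complex.exp (2 * Real.pi * Complex.I * θ) * z) =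
          Complex.exp (-(2 * Real.pi * Complex.I * θ)) * β z) →
      ∃ m : ℤ, ((D : ℝ) + 1) * θ = m) := by
  set ω : ℂ := Complex.exp (2 * Real.pi * Complex.I * θ) with hωdef
  have hωarg : (2 * (Real.pi:ℂ) * Complex.I * (θ:ℂ)) = ((2*Real.pi*θ : ℝ):ℂ) * Complex.I := by
    push_cast; ring
  have hωabs : ‖ω‖ = 1 := by
    rw [hωdef, hωarg, Complex.norm_exp_ofReal_mul_I]
  have hω0 : ω ≠ 0 := Complex.exp_ne_zero _
  have h2πI : (2*(Real.pi:ℂ)*Complex.I) ≠ 0 := by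
    simp [Real.pi_ne_zero, Complex.I_ne_zero, Complex.ofReal_ne_zero]
  constructor
  · intro h
    have hD1 : ω ^ D = ω := key D a ha β hβ ω ω hωabs hω0 h
    have h1 : ω ^ (D-1) * ω = 1 * ω := by
      rw [one_mul, ← pow_succ, show D - 1 + 1 = D by omega, hD1]
    have h2 : ω ^ (D-1) = 1 := mul_right_cancel₀ hω0 h1
    rw [hωdef, ← Complex.exp_nat_mul] at h2
    obtain ⟨n, hn⟩ := Complex.exp_eq_one_iff.mp h2
    refine ⟨n, ?_⟩
    have hc : ((D - 1 : ℕ) : ℂ) * (θ:ℂ) = (n:ℂ) := by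
      apply mul_left_cancel₀ h2πI
      linear_combination hn
    have hr : ((D - 1 : ℕ) : ℝ) * θ = (n : ℝ) := by exact_mod_cast hc
    rw [show ((D:ℝ) - 1) = ((D - 1 : ℕ) : ℝ) by
      rw [Nat.cast_sub (by omega : 1 ≤ D)]; norm_num]
    exact hr
  · intro h
    have hD1 : ω ^ D = ω⁻¹ := by
      have := key D a ha β hβ ω (Complex.exp (-(2 * Real.pi * Complex.I * θ)))
        hωabs (Complex.exp_ne_zero _) h
      rwa [Complex.exp_neg] at this
    have h2 : ω ^ (D+1) = 1 := by
      rw [pow_succ, hD1, inv_mul_cancel₀ hω0]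
    rw [hωdef, ← Complex.exp_nat_mul] at h2
    obtain ⟨n, hn⟩ := Complex.exp_eq_one_iff.mp h2
    refine ⟨n, ?_⟩
    have hc : ((D + 1 : ℕ) : ℂ) * (θ:ℂ) = (n:ℂ) := by
      apply mul_left_cancel₀ h2πI
      linear_combination hn
    have hr : ((D + 1 : ℕ) : ℝ) * θ = (n : ℝ) := by exact_mod_cast hc
    rw [show ((D:ℝ) + 1) = ((D + 1 : ℕ) : ℝ) by push_cast; ring]
    exact hr
end

section
/- Let m, n ≥ 0 be integers, let X be a nonempty connected topological space, and let p : X → ℝ^m × 𝕋^n be a covering map with finite fibers (a finite-to-one covering map), where 𝕋^n = (ℝ/ℤ)^n is the n-dimensional torus. Then X is homeomorphic to ℝ^m × 𝕋^n. -/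
set_option maxHeartbeats 800000

open Set Topology Filter

section HLP

variable {E B : Type*} [TopologicalSpace E] [TopologicalSpace B] {p : E → B}
variable {Y : Type*} [TopologicalSpace Y]

/-- One-step extension of a lift across an interval, using a single trivialization. -/
lemma step_lift {I : Type*} [TopologicalSpace I]
    (e : Bundle.Trivialization I p) {V : Set Y} {c d : ℝ}
    {F : Y × ℝ → B} (hF : Continuous F)
    (hFU : MapsTo F (V ×ˢ Icc c d) e.baseSet) (hcd : c ≤ d)
    {g : Y → E} (hg : ContinuousOn g V) (hpg : ∀ y ∈ V, p (g y) = F (y, c)) :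
    ∃ G : Y × ℝ → E, ContinuousOn G (V ×ˢ Icc c d) ∧
      (∀ z ∈ V ×ˢ Icc c d, p (G z) = F z) ∧ (∀ y ∈ V, G (y, c) = g y) := by
  have hmemV : ∀ y ∈ V, (y, c) ∈ V ×ˢ Icc c d := fun y hy => ⟨hy, le_refl c, hcd⟩
  have hsrc : ∀ y ∈ V, g y ∈ e.source := by
    intro y hy
    rw [e.mem_source, hpg y hy]
    exact hFU (hmemV y hy)
  refine ⟨fun z => e.toOpenPartialHomeomorph.symm (F z, (e (g z.1)).2), ?_, ?_, ?_⟩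
  · apply e.toOpenPartialHomeomorph.symm.continuousOn.comp
    · apply ContinuousOn.prodMk hF.continuousOn
      have h1 : ContinuousOn (fun y => (e (g y)).2) V := by
        have h2 : ContinuousOn (fun y => e.toOpenPartialHomeomorph (g y)) V :=
          e.toOpenPartialHomeomorph.continuousOn.comp hg (fun y hy => hsrc y hy)
        exact continuous_snd.comp_continuousOn h2
      exact h1.comp continuousOn_fst (fun z hz => hz.1)
    · intro z hz
      rw [e.toOpenPartialHomeomorph.symm_source, e.target_eq]
      exact ⟨hFU hz, trivial⟩
  · intro z hz
    exact e.proj_symm_apply' (hFU hz)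
  · intro y hy
    have h1 : (F (y, c), (e (g y)).2) = e (g y) := by
      refine Prod.ext ?_ rfl
      rw [← hpg y hy, e.coe_fst (hsrc y hy)]
    show e.toOpenPartialHomeomorph.symm (F (y, c), (e (g y)).2) = g y
    rw [h1]
    exact e.toOpenPartialHomeomorph.left_inv (hsrc y hy)

variable (hp : IsCoveringMap p)
include hp

lemma range_closed_cov : IsClosed (range p) := by
  rw [← isOpen_compl_iff, isOpen_iff_forall_mem_open]
  intro x hx
  obtain ⟨_, U, hxU, hU, _, H, _⟩ := hp x
  refine ⟨U, ?_, hU, hxU⟩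
  rintro _ hyU ⟨e, rfl⟩
  exact hx ⟨_, (H ⟨e, hyU⟩).2.2⟩

/-- Local lift over `V ×ˢ Icc 0 T`. -/
lemma chain_lift {F : Y × ℝ → B} (hF : Continuous F) {g : Y → E} (hg : Continuous g)
    (hpg : ∀ y, p (g y) = F (y, 0)) (y₀ : Y) {T : ℝ} (hT : 0 ≤ T) :
    ∃ V, IsOpen V ∧ y₀ ∈ V ∧ ∃ G : Y × ℝ → E, ContinuousOn G (V ×ˢ Icc 0 T) ∧
      (∀ z ∈ V ×ˢ Icc 0 T, p (G z) = F z) ∧ (∀ y ∈ V, G (y, 0) = g y) := by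
  -- choose evenly covered data along the segment
  have hne : ∀ t : Icc (0:ℝ) T, Nonempty (p ⁻¹' {F (y₀, t)}) := by
    have hsub : (fun t : ℝ => F (y₀, t)) '' Icc 0 T ⊆ range p :=
      (isPreconnected_Icc.image _ (hF.comp (continuous_const.prodMk continuous_id)).continuousOn).subset_isClopen
        ⟨range_closed_cov hp, hp.isOpenMap.isOpen_range⟩ ⟨F (y₀, 0), ⟨0, ⟨le_refl 0, hT⟩, rfl⟩, ⟨g y₀, hpg y₀⟩⟩
    intro t
    obtain ⟨x, hx⟩ := hsub ⟨t, t.2, rfl⟩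
    exact ⟨⟨x, hx⟩⟩
  have hch : ∀ t : Icc (0:ℝ) T, ∃ (W : Set Y) (J : Set ℝ),
      IsOpen W ∧ y₀ ∈ W ∧ IsOpen J ∧ (t : ℝ) ∈ J ∧
      W ×ˢ J ⊆ F ⁻¹' (hp (F (y₀, t))).toTrivialization.baseSet := by
    intro t
    have hbs : IsOpen ((hp (F (y₀, t))).toTrivialization.baseSet) :=
      (hp (F (y₀, t))).toTrivialization.open_baseSet
    have hmem : F (y₀, (t:ℝ)) ∈ (hp (F (y₀, t))).toTrivialization.baseSet :=
      (hp (F (y₀, t))).mem_toTrivialization_baseSet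
    have : F ⁻¹' (hp (F (y₀, t))).toTrivialization.baseSet ∈ 𝓝 (y₀, (t : ℝ)) :=
      hF.continuousAt.preimage_mem_nhds (hbs.mem_nhds hmem)
    rw [mem_nhds_prod_iff'] at this
    obtain ⟨W, J, hW, hyW, hJ, htJ, hsub⟩ := this
    exact ⟨W, J, hW, hyW, hJ, htJ, hsub⟩
  choose W J hWo hy₀W hJo htJ hsub using hch
  -- Lebesgue number for the cover of [0, T] by the J's
  obtain ⟨δ, hδ, hball⟩ := lebesgue_number_lemma_of_metric (isCompact_Icc (a := (0:ℝ)) (b := T))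
    hJo (fun t ht => mem_iUnion.2 ⟨⟨t, ht⟩, htJ ⟨t, ht⟩⟩)
  obtain ⟨M, hM⟩ := exists_nat_gt (T / δ)
  have hM0 : 0 < (M : ℝ) := lt_of_le_of_lt (div_nonneg hT hδ.le) hM
  have hMnat : 0 < M := by exact_mod_cast hM0
  have hmesh : T / M < δ := by
    have h1 : T < M * δ := (div_lt_iff₀ hδ).1 hM
    rw [div_lt_iff₀ hM0]
    linarith
  have hmesh0 : 0 ≤ T / M := div_nonneg hT hM0.le
  set c : ℕ → ℝ := fun j => (j : ℝ) * (T / M) with hc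
  have hc0 : c 0 = 0 := by simp [hc]
  have hcmono : ∀ j, c j ≤ c (j + 1) := by
    intro j
    apply mul_le_mul_of_nonneg_right _ hmesh0
    exact_mod_cast Nat.le_succ j
  have hcnonneg : ∀ j, 0 ≤ c j := fun j => mul_nonneg (Nat.cast_nonneg j) hmesh0
  have hcM : c M = T := by
    simp only [hc]
    field_simp
  have hcle : ∀ j, j ≤ M → c j ∈ Icc 0 T := by
    intro j hj
    refine ⟨hcnonneg j, ?_⟩
    rw [← hcM]
    exact mul_le_mul_of_nonneg_right (by exact_mod_cast hj) hmesh0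
  -- for each j < M, an index t_j whose J contains [c j, c (j+1)]
  have hseg : ∀ j : Fin M, ∃ t : Icc (0:ℝ) T, Icc (c j) (c (j+1)) ⊆ J t := by
    intro j
    obtain ⟨t, ht⟩ := hball (c j) (hcle j j.2.le)
    refine ⟨t, fun x hx => ht ?_⟩
    rw [Metric.mem_ball, Real.dist_eq, abs_of_nonneg (by linarith [hx.1])]
    have : x ≤ c j + T / M := by
      have := hx.2
      simp only [hc] at this ⊢
      push_cast at this ⊢
      linarith
    linarith
  choose ti hti using hseg
  set V : Set Y := ⋂ j : Fin M, W (ti j) with hV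
  have hVo : IsOpen V := isOpen_iInter_of_finite (fun j => hWo (ti j))
  have hy₀V : y₀ ∈ V := mem_iInter.2 fun j => hy₀W (ti j)
  have hVsub : ∀ j : Fin M, V ⊆ W (ti j) := fun j => iInter_subset _ j
  -- recursion
  have main : ∀ j, j ≤ M → ∃ G : Y × ℝ → E, ContinuousOn G (V ×ˢ Icc 0 (c j)) ∧
      (∀ z ∈ V ×ˢ Icc 0 (c j), p (G z) = F z) ∧ (∀ y ∈ V, G (y, 0) = g y) := by
    intro j
    induction j with
    | zero =>
      intro _
      refine ⟨fun z => g z.1, hg.comp_continuousOn continuousOn_fst, ?_, fun y _ => rfl⟩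
      rintro ⟨y, t⟩ ⟨_, ht⟩
      rw [hc0] at ht
      have : t = 0 := le_antisymm ht.2 ht.1
      rw [this, hpg]
    | succ j ih =>
      intro hj
      obtain ⟨G₁, hG₁c, hG₁l, hG₁i⟩ := ih (le_of_lt hj)
      have hjM : j < M := hj
      set jj : Fin M := ⟨j, hjM⟩
      set e := (hp (F (y₀, ti jj))).toTrivialization with he
      have hFU : MapsTo F (V ×ˢ Icc (c j) (c (j+1))) e.baseSet := by
        rintro ⟨y, t⟩ ⟨hy, ht⟩
        exact hsub (ti jj) ⟨hVsub jj hy, hti jj ht⟩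
      have hgc : ContinuousOn (fun y => G₁ (y, c j)) V := by
        apply hG₁c.comp (Continuous.continuousOn (continuous_id.prodMk continuous_const))
        intro y hy
        exact ⟨hy, hcnonneg j, le_refl _⟩
      have hpgc : ∀ y ∈ V, p (G₁ (y, c j)) = F (y, c j) := by
        intro y hy
        exact hG₁l (y, c j) ⟨hy, hcnonneg j, le_refl _⟩
      obtain ⟨G₂, hG₂c, hG₂l, hG₂i⟩ := step_lift e hF hFU (hcmono j) hgc hpgc
      refine ⟨fun z => if z.2 ≤ c j then G₁ z else G₂ z, ?_, ?_, ?_⟩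
      · apply ContinuousOn.if
        · rintro ⟨y, t⟩ ⟨hz, hfr⟩
          have hfr' : t = c j := by
            have := frontier_le_subset_eq (continuous_snd) (continuous_const) hfr
            exact this
          simp only [hfr']
          exact (hG₂i y hz.1).symm
        · apply hG₁c.mono
          rintro ⟨y, t⟩ ⟨⟨hy, ht⟩, hcl⟩
          have : t ≤ c j := by
            have hcls : closure {a : Y × ℝ | a.2 ≤ c j} ⊆ {a : Y × ℝ | a.2 ≤ c j} :=
              closure_minimal (fun a ha => ha) (isClosed_le continuous_snd continuous_const)
            exact hcls hcl
          exact ⟨hy, ht.1, this⟩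
        · apply hG₂c.mono
          rintro ⟨y, t⟩ ⟨⟨hy, ht⟩, hcl⟩
          have : c j ≤ t := by
            have hcls : closure {a : Y × ℝ | ¬ a.2 ≤ c j} ⊆ {a : Y × ℝ | c j ≤ a.2} := by
              apply closure_minimal
              · intro a ha; exact le_of_lt (lt_of_not_ge ha)
              · exact isClosed_le continuous_const continuous_snd
            exact hcls hcl
          exact ⟨hy, this, ht.2⟩
      · rintro ⟨y, t⟩ ⟨hy, ht⟩
        by_cases h : t ≤ c j
        · simp only [h, if_true]
          exact hG₁l (y, t) ⟨hy, ht.1, h⟩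
        · simp only [h, if_false]
          exact hG₂l (y, t) ⟨hy, le_of_lt (lt_of_not_ge h), ht.2⟩
      · intro y hy
        show (if ((y, (0:ℝ)).2 ≤ c j) then G₁ (y, 0) else G₂ (y, 0)) = g y
        rw [if_pos (hcnonneg j)]
        exact hG₁i y hy
  obtain ⟨G, hGc, hGl, hGi⟩ := main M (le_refl M)
  rw [hcM] at hGc hGl
  exact ⟨V, hVo, hy₀V, G, hGc, hGl, hGi⟩


/-- Local two-sided lift over `V ×ˢ Icc (-T) T`. -/
lemma local_lift {F : Y × ℝ → B} (hF : Continuous F) {g : Y → E} (hg : Continuous g)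
    (hpg : ∀ y, p (g y) = F (y, 0)) (y₀ : Y) {T : ℝ} (hT : 0 ≤ T) :
    ∃ V, IsOpen V ∧ y₀ ∈ V ∧ ∃ G : Y × ℝ → E, ContinuousOn G (V ×ˢ Icc (-T) T) ∧
      (∀ z ∈ V ×ˢ Icc (-T) T, p (G z) = F z) ∧ (∀ y ∈ V, G (y, 0) = g y) := by
  obtain ⟨V₁, hV₁o, hV₁m, G₁, hG₁c, hG₁l, hG₁i⟩ := chain_lift hp hF hg hpg y₀ hT
  set F' : Y × ℝ → B := fun z => F (z.1, -z.2) with hF'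
  have hF'c : Continuous F' := hF.comp (continuous_fst.prodMk continuous_snd.neg)
  have hpg' : ∀ y, p (g y) = F' (y, 0) := by
    intro y
    show p (g y) = F (y, -0)
    rw [neg_zero]
    exact hpg y
  obtain ⟨V₂, hV₂o, hV₂m, G₂', hG₂c, hG₂l, hG₂i⟩ := chain_lift hp hF'c hg hpg' y₀ hT
  set G₂ : Y × ℝ → E := fun z => G₂' (z.1, -z.2) with hG₂
  have hmapsneg : MapsTo (fun z : Y × ℝ => (z.1, -z.2)) (V₂ ×ˢ Icc (-T) 0) (V₂ ×ˢ Icc 0 T) := by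
    rintro ⟨y, t⟩ ⟨hy, ht⟩
    obtain ⟨h1, h2⟩ := ht
    simp only [mem_prod, mem_Icc] at *
    exact ⟨hy, by linarith, by linarith⟩
  have hG₂cont : ContinuousOn G₂ (V₂ ×ˢ Icc (-T) 0) :=
    hG₂c.comp (Continuous.continuousOn (continuous_fst.prodMk continuous_snd.neg)) hmapsneg
  have hG₂lift : ∀ z ∈ V₂ ×ˢ Icc (-T) 0, p (G₂ z) = F z := by
    rintro ⟨y, t⟩ hz
    have := hG₂l (y, -t) (hmapsneg hz)
    simpa [hF', neg_neg] using this
  have hG₂init : ∀ y ∈ V₂, G₂ (y, 0) = g y := by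
    intro y hy
    show G₂' (y, -0) = g y
    rw [neg_zero]
    exact hG₂i y hy
  refine ⟨V₁ ∩ V₂, hV₁o.inter hV₂o, ⟨hV₁m, hV₂m⟩,
    fun z => if z.2 ≤ 0 then G₂ z else G₁ z, ?_, ?_, ?_⟩
  · apply ContinuousOn.if
    · rintro ⟨y, t⟩ ⟨hz, hfr⟩
      have hfr' : t = 0 := frontier_le_subset_eq continuous_snd continuous_const hfr
      simp only [hfr']
      rw [hG₂init y hz.1.2, hG₁i y hz.1.1]
    · apply hG₂cont.mono
      rintro ⟨y, t⟩ ⟨⟨hy, ht⟩, hcl⟩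
      have hle : t ≤ 0 :=
        closure_minimal (fun a ha => ha) (isClosed_le continuous_snd continuous_const) hcl
      exact ⟨hy.2, ht.1, hle⟩
    · apply hG₁c.mono
      rintro ⟨y, t⟩ ⟨⟨hy, ht⟩, hcl⟩
      have hge : 0 ≤ t := by
        have hcls : closure {a : Y × ℝ | ¬ a.2 ≤ 0} ⊆ {a : Y × ℝ | 0 ≤ a.2} :=
          closure_minimal (fun a ha => le_of_lt (lt_of_not_ge ha))
            (isClosed_le continuous_const continuous_snd)
        exact hcls hcl
      exact ⟨hy.1, hge, ht.2⟩
  · rintro ⟨y, t⟩ ⟨hy, ht⟩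
    by_cases h : t ≤ 0
    · simp only [h, if_true]
      exact hG₂lift (y, t) ⟨hy.2, ht.1, h⟩
    · simp only [h, if_false]
      exact hG₁l (y, t) ⟨hy.1, le_of_lt (lt_of_not_ge h), ht.2⟩
  · intro y hy
    show (if (0:ℝ) ≤ 0 then G₂ (y, 0) else G₁ (y, 0)) = g y
    rw [if_pos (le_refl (0:ℝ))]
    exact hG₂init y hy.2

/-- Two local lifts agreeing at the `0` slice agree wherever both are defined. -/
lemma lift_agree {F : Y × ℝ → B} (hF : Continuous F)
    {V V' : Set Y} {T T' : ℝ} (hT : 0 ≤ T) (hT' : 0 ≤ T')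
    {G G' : Y × ℝ → E} {g : Y → E}
    (hGc : ContinuousOn G (V ×ˢ Icc (-T) T)) (hGl : ∀ z ∈ V ×ˢ Icc (-T) T, p (G z) = F z)
    (hGi : ∀ y ∈ V, G (y, 0) = g y)
    (hG'c : ContinuousOn G' (V' ×ˢ Icc (-T') T'))
    (hG'l : ∀ z ∈ V' ×ˢ Icc (-T') T', p (G' z) = F z)
    (hG'i : ∀ y ∈ V', G' (y, 0) = g y)
    {y : Y} (hyV : y ∈ V) (hyV' : y ∈ V') {t : ℝ} (ht : |t| ≤ min T T') :
    G (y, t) = G' (y, t) := by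
  set m := min T T' with hm
  have hm0 : 0 ≤ m := le_min hT hT'
  set s : Set (Y × ℝ) := (fun u : ℝ => (y, u)) '' Icc (-m) m with hs
  have hsconn : IsPreconnected s :=
    isPreconnected_Icc.image _ (Continuous.continuousOn (continuous_const.prodMk continuous_id))
  have hsub : s ⊆ V ×ˢ Icc (-T) T := by
    rintro _ ⟨u, hu, rfl⟩
    exact ⟨hyV, le_trans (neg_le_neg (min_le_left T T')) hu.1,
      le_trans hu.2 (min_le_left T T')⟩
  have hsub' : s ⊆ V' ×ˢ Icc (-T') T' := by
    rintro _ ⟨u, hu, rfl⟩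
    exact ⟨hyV', le_trans (neg_le_neg (min_le_right T T')) hu.1,
      le_trans hu.2 (min_le_right T T')⟩
  have h0s : (y, (0:ℝ)) ∈ s := ⟨0, ⟨neg_nonpos.2 hm0, hm0⟩, rfl⟩
  have heq := hp.eqOn_of_comp_eqOn hsconn (hGc.mono hsub) (hG'c.mono hsub')
    (fun z hz => by
      show p (G z) = p (G' z)
      rw [hGl z (hsub hz), hG'l z (hsub' hz)])
    h0s (by rw [hGi y hyV, hG'i y hyV'])
  exact heq ⟨t, abs_le.1 ht, rfl⟩

/-- Global homotopy lifting over `Y × ℝ`. -/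
lemma hlp {F : Y × ℝ → B} (hF : Continuous F) {g : Y → E} (hg : Continuous g)
    (hpg : ∀ y, p (g y) = F (y, 0)) :
    ∃ G : Y × ℝ → E, Continuous G ∧ (∀ z, p (G z) = F z) ∧ ∀ y, G (y, 0) = g y := by
  have key : ∀ (y : Y) (t : ℝ), ∃ V, IsOpen V ∧ y ∈ V ∧ ∃ G : Y × ℝ → E,
      ContinuousOn G (V ×ˢ Icc (-(|t|+1)) (|t|+1)) ∧
      (∀ z ∈ V ×ˢ Icc (-(|t|+1)) (|t|+1), p (G z) = F z) ∧
      (∀ y' ∈ V, G (y', 0) = g y') :=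
    fun y t => local_lift hp hF hg hpg y (by positivity)
  choose V hVo hVm G hGc hGl hGi using key
  have habs : ∀ t : ℝ, t ∈ Icc (-(|t|+1)) (|t|+1) := by
    intro t
    constructor
    · have := neg_abs_le t; linarith
    · have := le_abs_self t; linarith
  have hmem : ∀ z : Y × ℝ, z ∈ V z.1 z.2 ×ˢ Icc (-(|z.2|+1)) (|z.2|+1) :=
    fun z => ⟨hVm z.1 z.2, habs z.2⟩
  refine ⟨fun z => G z.1 z.2 z, ?_, fun z => hGl z.1 z.2 z (hmem z), fun y => hGi y 0 y (hVm y 0)⟩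
  rw [continuous_iff_continuousAt]
  rintro ⟨y₀, t₀⟩
  set O : Set (Y × ℝ) := V y₀ t₀ ×ˢ Ioo (-(|t₀|+1)) (|t₀|+1) with hO
  have hOopen : IsOpen O := (hVo y₀ t₀).prod isOpen_Ioo
  have hOmem : (y₀, t₀) ∈ O := by
    refine ⟨hVm y₀ t₀, ?_, ?_⟩
    · have := neg_abs_le t₀; linarith
    · have := le_abs_self t₀; linarith
  have heqO : Set.EqOn (fun z : Y × ℝ => G z.1 z.2 z) (G y₀ t₀) O := by
    rintro ⟨y, t⟩ hz
    have habst : |t| ≤ min (|t|+1) (|t₀|+1) := by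
      have h2 : |t| ≤ |t₀| + 1 := abs_le.2 ⟨le_of_lt hz.2.1, le_of_lt hz.2.2⟩
      exact le_min (by linarith) h2
    exact lift_agree hp hF (by positivity) (by positivity)
      (hGc y t) (hGl y t) (hGi y t) (hGc y₀ t₀) (hGl y₀ t₀) (hGi y₀ t₀)
      (hVm y t) hz.1 habst
  have hsubO : O ⊆ V y₀ t₀ ×ˢ Icc (-(|t₀|+1)) (|t₀|+1) :=
    prod_mono_right Ioo_subset_Icc_self
  have : ContinuousOn (fun z : Y × ℝ => G z.1 z.2 z) O :=
    ((hGc y₀ t₀).mono hsubO).congr heqO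
  exact this.continuousAt (hOopen.mem_nhds hOmem)

end HLP

section LiftPi

variable {E B : Type*} [TopologicalSpace E] [TopologicalSpace B] {p : E → B}

lemma lift_homeo {Z Y : Type*} [TopologicalSpace Z] [TopologicalSpace Y] (h : Z ≃ₜ Y)
    (hY : ∀ F : Y → B, Continuous F → ∀ y₀ x₀, p x₀ = F y₀ →
      ∃ f : Y → E, Continuous f ∧ (∀ y, p (f y) = F y) ∧ f y₀ = x₀) :
    ∀ F : Z → B, Continuous F → ∀ z₀ x₀, p x₀ = F z₀ →
      ∃ f : Z → E, Continuous f ∧ (∀ z, p (f z) = F z) ∧ f z₀ = x₀ := by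
  intro F hF z₀ x₀ hx₀
  obtain ⟨f, hfc, hfl, hfi⟩ := hY (F ∘ h.symm) (hF.comp h.symm.continuous) (h z₀) x₀
    (by simpa using hx₀)
  refine ⟨f ∘ h, hfc.comp h.continuous, fun z => ?_, by simpa using hfi⟩
  have := hfl (h z)
  simpa using this

variable (hp : IsCoveringMap p)
include hp

lemma lift_prod_real {Y : Type*} [TopologicalSpace Y]
    (hY : ∀ F : Y → B, Continuous F → ∀ y₀ x₀, p x₀ = F y₀ →
      ∃ f : Y → E, Continuous f ∧ (∀ y, p (f y) = F y) ∧ f y₀ = x₀) :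
    ∀ F : Y × ℝ → B, Continuous F → ∀ z₀ x₀, p x₀ = F z₀ →
      ∃ f : Y × ℝ → E, Continuous f ∧ (∀ z, p (f z) = F z) ∧ f z₀ = x₀ := by
  rintro F hF ⟨a₀, t₀⟩ x₀ hx₀
  set F' : Y × ℝ → B := fun z => F (z.1, z.2 + t₀) with hF'
  have hF'c : Continuous F' :=
    hF.comp (continuous_fst.prodMk (continuous_snd.add continuous_const))
  obtain ⟨g, hgc, hgl, hgi⟩ := hY (fun y => F' (y, 0))
    (hF'c.comp (continuous_id.prodMk continuous_const)) a₀ x₀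
    (by show p x₀ = F (a₀, 0 + t₀); rw [zero_add]; exact hx₀)
  obtain ⟨G, hGc, hGl, hGi⟩ := hlp hp hF'c hgc hgl
  refine ⟨fun z => G (z.1, z.2 - t₀),
    hGc.comp (continuous_fst.prodMk (continuous_snd.sub continuous_const)), fun z => ?_, ?_⟩
  · have h1 := hGl (z.1, z.2 - t₀)
    have h2 : z.2 - t₀ + t₀ = z.2 := by ring
    show p (G (z.1, z.2 - t₀)) = F z
    rw [h1]
    show F (z.1, z.2 - t₀ + t₀) = F z
    rw [h2]
  · show G (a₀, t₀ - t₀) = x₀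
    rw [sub_self, hGi a₀, hgi]

lemma lift_pi : ∀ (k : ℕ) (F : (Fin k → ℝ) → B), Continuous F → ∀ v₀ x₀, p x₀ = F v₀ →
    ∃ f : (Fin k → ℝ) → E, Continuous f ∧ (∀ v, p (f v) = F v) ∧ f v₀ = x₀ := by
  intro k
  induction k with
  | zero =>
    intro F hF v₀ x₀ hx₀
    refine ⟨fun _ => x₀, continuous_const, fun v => ?_, rfl⟩
    have : v = v₀ := Subsingleton.elim v v₀
    rw [this, hx₀]
  | succ k ih =>
    have h : (Fin (k+1) → ℝ) ≃ₜ (Fin k → ℝ) × ℝ :=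
      (Homeomorph.piCongrLeft (Y := fun _ : Fin (k+1) => ℝ) finSumFinEquiv).symm.trans
        (Homeomorph.sumArrowHomeomorphProdArrow.trans
          ((Homeomorph.refl (Fin k → ℝ)).prodCongr (Homeomorph.funUnique (Fin 1) ℝ)))
    exact lift_homeo h (lift_prod_real hp ih)

lemma lift_prod_pi (m n : ℕ) :
    ∀ F : ((Fin m → ℝ) × (Fin n → ℝ)) → B, Continuous F → ∀ z₀ x₀, p x₀ = F z₀ →
      ∃ f : ((Fin m → ℝ) × (Fin n → ℝ)) → E, Continuous f ∧ (∀ z, p (f z) = F z) ∧ f z₀ = x₀ := by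
  have h : ((Fin m → ℝ) × (Fin n → ℝ)) ≃ₜ (Fin (m+n) → ℝ) :=
    Homeomorph.sumArrowHomeomorphProdArrow.symm.trans
      (Homeomorph.piCongrLeft (Y := fun _ : Fin (m+n) => ℝ) finSumFinEquiv)
  exact lift_homeo h (lift_pi hp (m+n))

end LiftPi

section QSetup

open QuotientAddGroup

/-- The subgroup of integer vectors. -/
def intLat (n : ℕ) : AddSubgroup (Fin n → ℝ) where
  carrier := {b | ∀ i, ∃ z : ℤ, b i = (z : ℝ)}
  zero_mem' := fun i => ⟨0, by simp⟩
  add_mem' := by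
    rintro a b ha hb i
    obtain ⟨za, hza⟩ := ha i
    obtain ⟨zb, hzb⟩ := hb i
    exact ⟨za + zb, by simp [Pi.add_apply, hza, hzb]⟩
  neg_mem' := by
    rintro a ha i
    obtain ⟨za, hza⟩ := ha i
    exact ⟨-za, by simp [Pi.neg_apply, hza]⟩

lemma mem_intLat {n : ℕ} {b : Fin n → ℝ} :
    b ∈ intLat n ↔ ∀ i, ∃ z : ℤ, b i = (z : ℝ) := Iff.rfl

/-- Coordinatewise projection to the torus. -/
noncomputable def qn (n : ℕ) : (Fin n → ℝ) →+ (Fin n → AddCircle (1:ℝ)) :=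
  AddMonoidHom.mk' (fun b i => (b i : AddCircle (1:ℝ))) (fun a b => by
    funext i
    show ((a i + b i : ℝ) : AddCircle (1:ℝ)) = (a i : ℝ) + (b i : ℝ)
    exact map_add (QuotientAddGroup.mk' (AddSubgroup.zmultiples (1:ℝ))) (a i) (b i))

lemma qn_continuous (n : ℕ) : Continuous (qn n) := by
  apply continuous_pi
  intro i
  exact continuous_quotient_mk'.comp (continuous_apply i)

lemma qn_surjective (n : ℕ) : Function.Surjective (qn n) := by
  intro y
  have : ∀ i, ∃ r : ℝ, (r : AddCircle (1:ℝ)) = y i := fun i => Quotient.exists_rep (y i)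
  choose r hr using this
  exact ⟨r, funext hr⟩

lemma qn_isOpenMap (n : ℕ) : IsOpenMap (qn n) := by
  intro O hO
  rw [isOpen_iff_forall_mem_open]
  rintro _ ⟨x, hx, rfl⟩
  obtain ⟨I, u, hu, hsub⟩ := isOpen_pi_iff.1 hO x hx
  classical
  set J : Fin n → Set ℝ := fun i => if i ∈ I then u i else Set.univ with hJ
  have hJo : ∀ i, IsOpen (J i) := by
    intro i
    by_cases hi : i ∈ I <;> simp [hJ, hi, (hu i · |>.1)]
  have hxJ : x ∈ Set.pi Set.univ J := by
    intro i _
    by_cases hi : i ∈ I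
    · simp only [hJ, if_pos hi]
      exact (hu i hi).2
    · simp [hJ, if_neg hi]
  have hJsub : Set.pi Set.univ J ⊆ O := by
    intro y hy
    apply hsub
    intro i hi
    have hi' : i ∈ I := hi
    have := hy i (Set.mem_univ i)
    simpa [hJ, if_pos hi'] using this
  have himg : qn n '' (Set.pi Set.univ J) =
      Set.pi Set.univ (fun i => ((↑) : ℝ → AddCircle (1:ℝ)) '' (J i)) := by
    apply Set.Subset.antisymm
    · rintro _ ⟨z, hz, rfl⟩ i _
      exact ⟨z i, hz i (Set.mem_univ i), rfl⟩
    · intro y hy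
      have : ∀ i, ∃ r : ℝ, r ∈ J i ∧ (r : AddCircle (1:ℝ)) = y i := by
        intro i
        obtain ⟨r, hr, hr2⟩ := hy i (Set.mem_univ i)
        exact ⟨r, hr, hr2⟩
      choose r hr1 hr2 using this
      exact ⟨r, fun i _ => hr1 i, funext hr2⟩
  refine ⟨Set.pi Set.univ (fun i => ((↑) : ℝ → AddCircle (1:ℝ)) '' (J i)), ?_, ?_, ?_⟩
  · rw [← himg]
    exact Set.image_mono hJsub
  · apply isOpen_set_pi Set.finite_univ
    intro i _
    exact QuotientAddGroup.isOpenMap_coe _ (hJo i)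
  · rw [← himg]
    exact ⟨x, hxJ, rfl⟩

lemma qn_ker {n : ℕ} {b : Fin n → ℝ} : qn n b = 0 ↔ b ∈ intLat n := by
  constructor
  · intro h i
    have hi : (b i : AddCircle (1:ℝ)) = 0 := congrFun h i
    obtain ⟨z, hz⟩ := (AddCircle.coe_eq_zero_iff (1:ℝ)).1 hi
    exact ⟨z, by simpa using hz.symm⟩
  · intro h
    funext i
    obtain ⟨z, hz⟩ := h i
    show (b i : AddCircle (1:ℝ)) = 0
    rw [hz]
    rw [AddCircle.coe_eq_zero_iff]
    exact ⟨z, by simp⟩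

/-- The full projection `ℝ^m × ℝ^n → ℝ^m × 𝕋^n`. -/
noncomputable def qHom (m n : ℕ) : ((Fin m → ℝ) × (Fin n → ℝ)) →+ ((Fin m → ℝ) × (Fin n → AddCircle (1:ℝ))) :=
  (AddMonoidHom.id _).prodMap (qn n)

lemma qHom_continuous (m n : ℕ) : Continuous (qHom m n) :=
  continuous_id.prodMap (qn_continuous n)

lemma qHom_surjective (m n : ℕ) : Function.Surjective (qHom m n) := by
  rintro ⟨a, b⟩
  obtain ⟨r, hr⟩ := qn_surjective n b
  exact ⟨(a, r), by simp [qHom, hr]⟩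

lemma qHom_isOpenMap (m n : ℕ) : IsOpenMap (qHom m n) :=
  IsOpenMap.id.prodMap (qn_isOpenMap n)

lemma qHom_ker {m n : ℕ} {x : (Fin m → ℝ) × (Fin n → ℝ)} :
    qHom m n x = 0 ↔ x.1 = 0 ∧ x.2 ∈ intLat n := by
  rw [Prod.ext_iff]
  exact and_congr Iff.rfl qn_ker

end QSetup

section Lattice

/-- A subgroup of the integer lattice spanning `ℝ^n` is the image of the integer lattice
under a linear automorphism. -/
lemma exists_lin (n : ℕ) (Γ₂ : AddSubgroup (Fin n → ℝ)) (hsub : Γ₂ ≤ intLat n)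
    (hspan : Submodule.span ℝ (Γ₂ : Set (Fin n → ℝ)) = ⊤) :
    ∃ Lin : (Fin n → ℝ) ≃ₗ[ℝ] (Fin n → ℝ),
      Lin '' (intLat n : Set (Fin n → ℝ)) = (Γ₂ : Set (Fin n → ℝ)) := by
  classical
  set L : Submodule ℤ (Fin n → ℝ) := AddSubgroup.toIntSubmodule Γ₂ with hL
  have hLset : (L : Set (Fin n → ℝ)) = (Γ₂ : Set (Fin n → ℝ)) :=
    AddSubgroup.coe_toIntSubmodule Γ₂
  -- integrality of members
  have hint : ∀ x ∈ L, ∀ i, ∃ z : ℤ, x i = (z : ℝ) := by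
    intro x hx i
    have : x ∈ Γ₂ := by rwa [← SetLike.mem_coe, hLset] at hx
    exact hsub this i
  haveI hdisc : DiscreteTopology L := by
    rw [discreteTopology_iff_isOpen_singleton]
    rintro ⟨x, hx⟩
    have hset : {(⟨x, hx⟩ : L)} = (Subtype.val ⁻¹' Metric.ball x (1/2) : Set L) := by
      ext ⟨y, hy⟩
      simp only [Set.mem_singleton_iff, Set.mem_preimage, Metric.mem_ball, Subtype.ext_iff]
      constructor
      · rintro rfl
        simp
      · intro hdist
        funext i
        obtain ⟨zy, hzy⟩ := hint y hy i
        obtain ⟨zx, hzx⟩ := hint x hx i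
        have h1 : dist (y i) (x i) < 1/2 := lt_of_le_of_lt (dist_le_pi_dist y x i) hdist
        rw [hzy, hzx] at h1 ⊢
        rw [Real.dist_eq, ← Int.cast_sub, ← Int.cast_abs] at h1
        have h3 : ((|zy - zx| : ℤ) : ℝ) < 1 := by linarith
        have h4 : (|zy - zx| : ℤ) < 1 := by exact_mod_cast h3
        have h5 : zy - zx = 0 := Int.abs_lt_one_iff.mp h4
        have h6 : zy = zx := by omega
        rw [h6]
    rw [hset]
    exact continuous_subtype_val.isOpen_preimage _ Metric.isOpen_ball
  haveI hzl : IsZLattice ℝ L := ⟨by rw [hLset]; exact hspan⟩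
  haveI := ZLattice.module_free ℝ L
  haveI := ZLattice.module_finite ℝ L
  set ι := Module.Free.ChooseBasisIndex ℤ L with hι
  set b : Module.Basis ι ℤ L := Module.Free.chooseBasis ℤ L with hb
  set β : Module.Basis ι ℝ (Fin n → ℝ) := Module.Basis.ofZLatticeBasis ℝ L b with hβ
  have hcard : Fintype.card ι = n := by
    have h1 := ZLattice.rank ℝ L
    rw [Module.finrank_pi ℝ] at h1
    rw [← Module.finrank_eq_card_chooseBasisIndex]
    simpa using h1
  have e : Fin n ≃ ι := (Fintype.equivFinOfCardEq hcard).symm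
  set Lin := (Pi.basisFun ℝ (Fin n)).equiv β e with hLin
  have hLinapply : ∀ z : Fin n → ℝ, Lin z = ∑ j, z j • β (e j) := by
    intro z
    have hz : z = ∑ j, z j • Pi.basisFun ℝ (Fin n) j := by
      have := (Pi.basisFun ℝ (Fin n)).sum_repr z
      simpa [Pi.basisFun_repr] using this.symm
    calc Lin z = Lin (∑ j, z j • Pi.basisFun ℝ (Fin n) j) := by rw [← hz]
    _ = ∑ j, z j • Lin (Pi.basisFun ℝ (Fin n) j) := by
        rw [map_sum]
        simp_rw [map_smul]
    _ = ∑ j, z j • β (e j) := by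
        simp_rw [hLin, Module.Basis.equiv_apply]
  refine ⟨Lin, Set.Subset.antisymm ?_ ?_⟩
  · rintro _ ⟨z, hz, rfl⟩
    choose w hw using hz
    rw [← hLset, SetLike.mem_coe]
    rw [hLinapply]
    apply Submodule.sum_mem
    intro j _
    have h1 : z j • β (e j) = w j • β (e j) := by
      rw [hw j, ← Int.cast_smul_eq_zsmul ℝ]
    rw [h1]
    have hmem : (β (e j)) ∈ L := by
      rw [hβ, Module.Basis.ofZLatticeBasis_apply]
      exact (b (e j)).2
    exact Submodule.smul_mem L (w j) hmem
  · intro γ hγ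
    have hγL : γ ∈ L := by rwa [← SetLike.mem_coe, hLset]
    set lγ : L := ⟨γ, hγL⟩ with hlγ
    set c := b.repr lγ with hc
    set z : Fin n → ℝ := fun j => (c (e j) : ℝ) with hzdef
    refine ⟨z, fun i => ⟨c (e i), rfl⟩, ?_⟩
    rw [hLinapply]
    have h1 : ∀ j, z j • β (e j) = ((c (e j) • b (e j) : L) : Fin n → ℝ) := by
      intro j
      rw [hzdef]
      simp only [Int.cast_smul_eq_zsmul ℝ]
      rw [hβ, Module.Basis.ofZLatticeBasis_apply]
      simp
    simp_rw [h1]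
    rw [← Submodule.coe_sum]
    have h2 : ∑ j, c (e j) • b (e j) = ∑ i, c i • b i :=
      Fintype.sum_equiv e _ _ (fun j => rfl)
    rw [h2]
    have h3 : ∑ i, c i • b i = lγ := b.sum_repr lγ
    rw [h3]

end Lattice

/-- Let `m, n ≥ 0`, let `X` be a nonempty connected
topological space, and let `p : X → ℝ^m × 𝕋^n` be a covering map with finite
fibers, where `𝕋^n = (ℝ/ℤ)^n`.  Then `X` is homeomorphic to `ℝ^m × 𝕋^n`. -/
theorem finite_cover_of_euclidean_times_torus (m n : ℕ) (X : Type*)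
    [TopologicalSpace X] [Nonempty X] [ConnectedSpace X]
    (p : X → (Fin m → ℝ) × (Fin n → AddCircle (1 : ℝ)))
    (hp : IsCoveringMap p)
    (hfin : ∀ y : (Fin m → ℝ) × (Fin n → AddCircle (1 : ℝ)),
      (p ⁻¹' {y}).Finite) :
    Nonempty (X ≃ₜ (Fin m → ℝ) × (Fin n → AddCircle (1 : ℝ))) := by
  classical
  set q : ((Fin m → ℝ) × (Fin n → ℝ)) → ((Fin m → ℝ) × (Fin n → AddCircle (1:ℝ))) :=
    ⇑(qHom m n) with hq
  have hqc : Continuous q := qHom_continuous m n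
  have hqs : Function.Surjective q := qHom_surjective m n
  have hqo : IsOpenMap q := qHom_isOpenMap m n
  obtain ⟨x₀⟩ := ‹Nonempty X›
  obtain ⟨g₀, hg₀⟩ := hqs (p x₀)
  obtain ⟨f, hfc, hfl, hfi⟩ := lift_prod_pi hp m n q hqc g₀ x₀ hg₀.symm
  have hq0 : q 0 = 0 := map_zero (qHom m n)
  have hqadd : ∀ a b, q (a + b) = q a + q b := fun a b => map_add (qHom m n) a b
  have hqneg : ∀ a, q (-a) = -(q a) := fun a => map_neg (qHom m n) a
  have hqsub : ∀ a b, q (a - b) = q a - q b := fun a b => map_sub (qHom m n) a b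
  -- translation lemmas
  have T1 : ∀ d : (Fin m → ℝ) × (Fin n → ℝ), f d = f 0 → ∀ a, f (a + d) = f a := by
    intro d hd a
    have hqd : q d = 0 := by
      have h1 : p (f d) = p (f 0) := by rw [hd]
      rw [hfl, hfl] at h1
      rwa [hq0] at h1
    have heq := hp.eq_of_comp_eq (g₁ := fun a => f (a + d)) (g₂ := f)
      (hfc.comp (continuous_id.add continuous_const)) hfc
      (funext fun a => by
        show p (f (a + d)) = p (f a)
        rw [hfl, hfl, hqadd]
        show q a + q d = q a
        rw [hqd, add_zero])
      0 (by show f (0 + d) = f 0; rw [zero_add, hd])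
    exact congrFun heq a
  have T2 : ∀ g g', f g = f g' ↔ f (g - g') = f 0 := by
    intro g g'
    constructor
    · intro hgg
      have hqd : q (g - g') = 0 := by
        have h1 : q g = q g' := by rw [← hfl, ← hfl, hgg]
        rw [hqsub]
        show q g - q g' = 0
        rw [h1, sub_self]
      have heq := hp.eq_of_comp_eq (g₁ := fun a => f (a + (g - g'))) (g₂ := f)
        (hfc.comp (continuous_id.add continuous_const)) hfc
        (funext fun a => by
          show p (f (a + (g - g'))) = p (f a)
          rw [hfl, hfl, hqadd]
          show q a + q (g - g') = q a
          rw [hqd, add_zero])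
        g' (by show f (g' + (g - g')) = f g'; rw [show g' + (g - g') = g by abel, hgg])
      have h2 := congrFun heq 0
      simp only [zero_add] at h2
      exact h2
    · intro hd
      have h2 := T1 (g - g') hd g'
      rwa [show g' + (g - g') = g by abel] at h2
  set Γ : AddSubgroup ((Fin m → ℝ) × (Fin n → ℝ)) :=
    { carrier := {d | f d = f 0}
      zero_mem' := rfl
      add_mem' := by
        intro a b ha hb
        show f (a + b) = f 0
        rw [T1 b hb a]
        exact ha
      neg_mem' := by
        intro a ha
        show f (-a) = f 0
        have h2 := T1 a ha (-a)
        rw [neg_add_cancel] at h2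
        exact h2.symm } with hΓdef
  have hmemΓ : ∀ d, d ∈ Γ ↔ f d = f 0 := fun d => Iff.rfl
  have hΓK : ∀ d ∈ Γ, q d = 0 := by
    intro d hd
    have h1 : p (f d) = p (f 0) := by rw [(hmemΓ d).1 hd]
    rw [hfl, hfl] at h1
    rwa [hq0] at h1
  -- f is an open map
  have hfopen : IsOpenMap f := by
    intro O hO
    rw [isOpen_iff_forall_mem_open]
    rintro _ ⟨g, hgO, rfl⟩
    set b := q g with hb
    haveI : DiscreteTopology (p ⁻¹' {b}) := (hp b).1
    haveI : Nonempty (p ⁻¹' {b}) := ⟨⟨f g, hfl g⟩⟩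
    set ec := (hp b).toTrivialization with hec
    have hbase : b ∈ ec.baseSet := (hp b).mem_toTrivialization_baseSet
    have hfg_src : f g ∈ ec.source := ec.mem_source.2 (by rw [hfl g]; exact hbase)
    set i₀ := (ec (f g)).2 with hi₀
    obtain ⟨ε, hε, hball⟩ := Metric.mem_nhds_iff.1
      (hqc.continuousAt.preimage_mem_nhds (ec.open_baseSet.mem_nhds hbase))
    set W := Metric.ball g ε with hW
    set s : _ → X := fun u => ec.toOpenPartialHomeomorph.symm (u, i₀) with hs
    have hscont : ContinuousOn s ec.baseSet := by
      apply ec.toOpenPartialHomeomorph.symm.continuousOn.comp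
        (Continuous.continuousOn (continuous_id.prodMk continuous_const))
      intro u hu
      rw [ec.toOpenPartialHomeomorph.symm_source, ec.target_eq]
      exact ⟨hu, trivial⟩
    have hps : ∀ u ∈ ec.baseSet, p (s u) = u := fun u hu => ec.proj_symm_apply' hu
    have heq : Set.EqOn f (fun z => s (q z)) W := by
      apply hp.eqOn_of_comp_eqOn (convex_ball g ε).isPreconnected
        hfc.continuousOn
        (hscont.comp hqc.continuousOn hball)
        (fun z hz => by
          show p (f z) = p (s (q z))
          rw [hfl, hps (q z) (hball hz)])
        (Metric.mem_ball_self hε)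
      have h1 : (b, i₀) = ec (f g) := Prod.ext (by rw [ec.coe_fst hfg_src, hfl]) rfl
      show f g = s (q g)
      calc f g = ec.toOpenPartialHomeomorph.symm (ec (f g)) :=
            (ec.toOpenPartialHomeomorph.left_inv hfg_src).symm
      _ = s (q g) := by rw [← h1]
    have himg_eq : f '' (O ∩ W) =
        ec.toOpenPartialHomeomorph.symm '' ((q '' (O ∩ W)) ×ˢ ({i₀} : Set (p ⁻¹' {b}))) := by
      ext x'
      constructor
      · rintro ⟨w, hw, rfl⟩
        exact ⟨(q w, i₀), ⟨⟨w, hw, rfl⟩, rfl⟩, (heq hw.2).symm⟩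
      · rintro ⟨⟨u, i⟩, ⟨⟨w, hw, rfl⟩, hi⟩, rfl⟩
        have h2 : i = i₀ := hi
        subst h2
        exact ⟨w, hw, (heq hw.2)⟩
    refine ⟨f '' (O ∩ W), Set.image_mono Set.inter_subset_left, ?_,
      ⟨g, ⟨hgO, Metric.mem_ball_self hε⟩, rfl⟩⟩
    rw [himg_eq]
    apply OpenPartialHomeomorph.isOpen_image_of_subset_source
    · exact (hqo _ (hO.inter Metric.isOpen_ball)).prod (isOpen_discrete _)
    · rw [ec.toOpenPartialHomeomorph.symm_source, ec.target_eq]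
      rintro ⟨u, i⟩ ⟨⟨w, hw, rfl⟩, _⟩
      exact ⟨hball hw.2, trivial⟩
  -- f is surjective
  have hfsurj : Function.Surjective f := by
    have hclosed : IsClosed (Set.range f) := by
      apply isClosed_of_closure_subset
      intro x hx
      set b := p x with hb
      haveI : DiscreteTopology (p ⁻¹' {b}) := (hp b).1
      haveI : Nonempty (p ⁻¹' {b}) := ⟨⟨x, rfl⟩⟩
      set ec := (hp b).toTrivialization with hec
      have hbase : b ∈ ec.baseSet := (hp b).mem_toTrivialization_baseSet
      have hx_src : x ∈ ec.source := ec.mem_source.2 hbase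
      set i₀ := (ec x).2 with hi₀
      obtain ⟨g₁, hg₁⟩ := hqs b
      obtain ⟨ε, hε, hball⟩ := Metric.mem_nhds_iff.1
        (hqc.continuousAt.preimage_mem_nhds (ec.open_baseSet.mem_nhds (by rw [hg₁]; exact hbase)))
      set V := (ec.source ∩ (Prod.snd ∘ ec) ⁻¹' {i₀}) ∩ p ⁻¹' (q '' Metric.ball g₁ ε) with hV
      have hVopen : IsOpen V := by
        apply IsOpen.inter
        · exact ec.continuousOn_toFun.isOpen_inter_preimage ec.open_source
            (continuous_snd.isOpen_preimage _ (isOpen_discrete _))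
        · exact (hqo _ Metric.isOpen_ball).preimage hp.continuous
      have hxV : x ∈ V :=
        ⟨⟨hx_src, rfl⟩, ⟨g₁, Metric.mem_ball_self hε, hg₁⟩⟩
      obtain ⟨x', hx'V, hx'rng⟩ := mem_closure_iff.1 hx V hVopen hxV
      obtain ⟨g', rfl⟩ := hx'rng
      obtain ⟨w, hwball, hwq⟩ : ∃ w ∈ Metric.ball g₁ ε, q w = q g' := by
        have h3 := hx'V.2
        rw [Set.mem_preimage, hfl] at h3
        obtain ⟨w, hw1, hw2⟩ := h3
        exact ⟨w, hw1, hw2⟩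
      set d := g' - w with hd
      have hqd : q d = 0 := by
        rw [hd, hqsub]
        show q g' - q w = 0
        rw [hwq, sub_self]
      set W := Metric.ball (g₁ + d) ε with hW
      have hqW : ∀ z ∈ W, q z ∈ ec.baseSet := by
        intro z hz
        have h1 : z - d ∈ Metric.ball g₁ ε := by
          rw [Metric.mem_ball] at hz ⊢
          have h2 : dist (z - d) g₁ = dist z (g₁ + d) := by
            rw [dist_eq_norm, dist_eq_norm]
            congr 1
            abel
          rw [h2]
          exact hz
        have h3 : q z = q (z - d) + q d := by
          rw [← hqadd]
          congr 1
          abel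
        rw [h3, hqd, add_zero]
        exact hball h1
      set s : _ → X := fun u => ec.toOpenPartialHomeomorph.symm (u, i₀) with hs
      have hscont : ContinuousOn s ec.baseSet := by
        apply ec.toOpenPartialHomeomorph.symm.continuousOn.comp
          (Continuous.continuousOn (continuous_id.prodMk continuous_const))
        intro u hu
        rw [ec.toOpenPartialHomeomorph.symm_source, ec.target_eq]
        exact ⟨hu, trivial⟩
      have hps : ∀ u ∈ ec.baseSet, p (s u) = u := fun u hu => ec.proj_symm_apply' hu
      have hg'W : g' ∈ W := by
        rw [hW, Metric.mem_ball]
        have h1 : g' = w + d := by rw [hd]; abel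
        rw [h1, dist_add_right]
        exact hwball
      have hfg'src : f g' ∈ ec.source := hx'V.1.1
      have hecfg' : (ec (f g')).2 = i₀ := hx'V.1.2
      have heq : Set.EqOn f (fun z => s (q z)) W := by
        apply hp.eqOn_of_comp_eqOn (convex_ball _ _).isPreconnected hfc.continuousOn
          (hscont.comp hqc.continuousOn hqW)
          (fun z hz => by
            show p (f z) = p (s (q z))
            rw [hfl, hps (q z) (hqW z hz)])
          hg'W
        have h1 : (q g', i₀) = ec (f g') :=
          Prod.ext (by rw [ec.coe_fst hfg'src, hfl]) hecfg'.symm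
        show f g' = s (q g')
        calc f g' = ec.toOpenPartialHomeomorph.symm (ec (f g')) :=
              (ec.toOpenPartialHomeomorph.left_inv hfg'src).symm
        _ = s (q g') := by rw [← h1]
      have hg₁d : g₁ + d ∈ W := Metric.mem_ball_self hε
      have hqg₁d : q (g₁ + d) = b := by
        rw [hqadd]
        show q g₁ + q d = b
        rw [hqd, add_zero, hg₁]
      have hfin2 : f (g₁ + d) = x := by
        rw [heq hg₁d]
        show s (q (g₁ + d)) = x
        rw [hqg₁d]
        have h1 : (b, i₀) = ec x := Prod.ext (by rw [ec.coe_fst hx_src]) rfl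
        calc s b = ec.toOpenPartialHomeomorph.symm (ec x) := by rw [hs, ← h1]
        _ = x := ec.toOpenPartialHomeomorph.left_inv hx_src
      exact ⟨g₁ + d, hfin2⟩
    have huniv : Set.range f = Set.univ :=
      IsClopen.eq_univ ⟨hclosed, hfopen.isOpen_range⟩ ⟨f 0, 0, rfl⟩
    intro x
    have : x ∈ Set.range f := by rw [huniv]; trivial
    exact this
  -- the lattice Γ₂
  set Γ₂ : AddSubgroup (Fin n → ℝ) := Γ.map (AddMonoidHom.snd _ _) with hΓ₂
  have hΓfst : ∀ x ∈ Γ, x.1 = 0 ∧ x.2 ∈ intLat n := by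
    intro x hx
    exact qHom_ker.1 (hΓK x hx)
  have hΓ₂sub : Γ₂ ≤ intLat n := by
    rintro b ⟨x, hx, rfl⟩
    exact (hΓfst x hx).2
  have hΓdec : ∀ x : (Fin m → ℝ) × (Fin n → ℝ), x ∈ Γ ↔ x.1 = 0 ∧ x.2 ∈ Γ₂ := by
    intro x
    constructor
    · intro hx
      exact ⟨(hΓfst x hx).1, ⟨x, hx, rfl⟩⟩
    · rintro ⟨h1, y, hy, h2⟩
      have h3 : x = y := by
        apply Prod.ext
        · rw [h1, (hΓfst y hy).1]
        · exact h2.symm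
      rwa [h3]
  -- Γ₂ spans ℝ^n
  have hspan : Submodule.span ℝ (Γ₂ : Set (Fin n → ℝ)) = ⊤ := by
    have hsingle : ∀ j : Fin n, Pi.single j (1:ℝ) ∈ Submodule.span ℝ (Γ₂ : Set (Fin n → ℝ)) := by
      intro j
      set vec : ℕ → (Fin m → ℝ) × (Fin n → ℝ) := fun N => (0, (N : ℝ) • (Pi.single j (1:ℝ) : Fin n → ℝ)) with hvec
      have hvecK : ∀ N, q (vec N) = 0 := by
        intro N
        refine qHom_ker.2 ⟨rfl, ?_⟩
        intro i
        refine ⟨if i = j then (N : ℤ) else 0, ?_⟩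
        show ((N:ℝ) • (Pi.single j (1:ℝ) : Fin n → ℝ)) i = _
        rw [Pi.smul_apply, Pi.single_apply]
        split_ifs with h
        · simp
        · simp
      have hfib : ∀ N, f (vec N) ∈ p ⁻¹' {(0 : (Fin m → ℝ) × (Fin n → AddCircle (1:ℝ)))} := by
        intro N
        simp only [Set.mem_preimage, Set.mem_singleton_iff]
        rw [hfl, hvecK]
      haveI := (hfin 0).to_subtype
      obtain ⟨N₁, N₂, hne, hNeq⟩ := Finite.exists_ne_map_eq_of_infinite
        (fun N : ℕ => (⟨f (vec N), hfib N⟩ : p ⁻¹' {(0 : (Fin m → ℝ) × (Fin n → AddCircle (1:ℝ)))}))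
      have hfeq : f (vec N₁) = f (vec N₂) := congrArg Subtype.val hNeq
      have hdiffΓ : vec N₁ - vec N₂ ∈ Γ := (T2 _ _).1 hfeq
      have h2 : ((N₁:ℝ) - N₂) • (Pi.single j (1:ℝ) : Fin n → ℝ) ∈ Γ₂ := by
        have h3 : (vec N₁ - vec N₂).2 ∈ Γ₂ := ⟨_, hdiffΓ, rfl⟩
        have h4 : (vec N₁ - vec N₂).2 = ((N₁:ℝ) - N₂) • (Pi.single j (1:ℝ) : Fin n → ℝ) := by
          show (N₁ : ℝ) • (Pi.single j (1:ℝ) : Fin n → ℝ) - (N₂ : ℝ) • (Pi.single j (1:ℝ) : Fin n → ℝ) = _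
          rw [← sub_smul]
        rwa [h4] at h3
      have hc : ((N₁:ℝ) - N₂) ≠ 0 := by
        intro h
        apply hne
        have h5 : (N₁:ℝ) = N₂ := sub_eq_zero.1 h
        exact_mod_cast h5
      have h3 : Pi.single j (1:ℝ) = ((N₁:ℝ) - N₂)⁻¹ • (((N₁:ℝ) - N₂) • (Pi.single j (1:ℝ) : Fin n → ℝ)) := by
        rw [smul_smul, inv_mul_cancel₀ hc, one_smul]
      rw [h3]
      exact Submodule.smul_mem _ _ (Submodule.subset_span h2)
    rw [eq_top_iff, ← (Pi.basisFun ℝ (Fin n)).span_eq]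
    apply Submodule.span_le.2
    rintro _ ⟨j, rfl⟩
    rw [Pi.basisFun_apply]
    exact hsingle j
  obtain ⟨Lin, hLin⟩ := exists_lin n Γ₂ hΓ₂sub hspan
  set L : ((Fin m → ℝ) × (Fin n → ℝ)) ≃ₗ[ℝ] ((Fin m → ℝ) × (Fin n → ℝ)) :=
    (LinearEquiv.refl ℝ (Fin m → ℝ)).prodCongr Lin with hLdef
  set K := (qHom m n).ker with hK
  have hKmem : ∀ x : (Fin m → ℝ) × (Fin n → ℝ), x ∈ K ↔ x.1 = 0 ∧ x.2 ∈ intLat n := by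
    intro x
    rw [hK, AddMonoidHom.mem_ker]
    exact qHom_ker
  have hLK : ∀ x, x ∈ K ↔ L x ∈ Γ := by
    intro x
    rw [hKmem, hΓdec]
    constructor
    · rintro ⟨h1, h2⟩
      refine ⟨h1, ?_⟩
      have h3 : Lin x.2 ∈ Lin '' (intLat n : Set (Fin n → ℝ)) := ⟨x.2, h2, rfl⟩
      rwa [hLin] at h3
    · rintro ⟨h1, h2⟩
      refine ⟨h1, ?_⟩
      have h2' : Lin x.2 ∈ (Γ₂ : Set (Fin n → ℝ)) := h2
      rw [← hLin] at h2'
      obtain ⟨y, hy, hyeq⟩ := h2'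
      have h3 : y = x.2 := Lin.injective hyeq
      show x.2 ∈ intLat n
      rwa [← h3]
  have hLc : Continuous L := by
    exact LinearMap.continuous_of_finiteDimensional (L.toLinearMap)
  have hLsymc : Continuous L.symm := by
    exact LinearMap.continuous_of_finiteDimensional (L.symm.toLinearMap)
  -- homeomorphism X ≃ₜ G ⧸ Γ
  have hcompatΓ : ∀ a b, (QuotientAddGroup.leftRel Γ) a b → f a = f b := by
    intro a b hab
    rw [QuotientAddGroup.leftRel_apply] at hab
    have h2 : b - a ∈ Γ := by rwa [show b - a = -a + b by abel]
    exact ((T2 b a).2 ((hmemΓ _).1 h2)).symm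
  set ef : (((Fin m → ℝ) × (Fin n → ℝ)) ⧸ Γ) → X := Quotient.lift f hcompatΓ with hef
  have hefc : Continuous ef := hfc.quotient_lift hcompatΓ
  have hefsurj : Function.Surjective ef := by
    intro x
    obtain ⟨g, rfl⟩ := hfsurj x
    exact ⟨QuotientAddGroup.mk g, rfl⟩
  have hefinj : Function.Injective ef := by
    intro a b
    refine Quotient.inductionOn₂ a b ?_
    intro a b hab
    have h1 : f a = f b := hab
    apply Quotient.sound
    apply QuotientAddGroup.leftRel_apply.2
    have h3 : b - a ∈ Γ := (hmemΓ _).2 ((T2 b a).1 h1.symm)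
    rwa [show -a + b = b - a by abel]
  have hefopen : IsOpenMap ef := by
    intro U hU
    have h1 : ef '' U = f '' (QuotientAddGroup.mk ⁻¹' U) := by
      ext x
      constructor
      · rintro ⟨u, hu, rfl⟩
        obtain ⟨a, rfl⟩ := Quotient.exists_rep u
        exact ⟨a, hu, rfl⟩
      · rintro ⟨a, ha, rfl⟩
        exact ⟨QuotientAddGroup.mk a, ha, rfl⟩
    rw [h1]
    exact hfopen _ (hU.preimage continuous_quotient_mk')
  set eX : (((Fin m → ℝ) × (Fin n → ℝ)) ⧸ Γ) ≃ₜ X :=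
    Equiv.toHomeomorphOfContinuousOpen (Equiv.ofBijective ef ⟨hefinj, hefsurj⟩) hefc hefopen
    with heX
  -- homeomorphism G ⧸ K ≃ₜ B
  have hcompatK : ∀ a b, (QuotientAddGroup.leftRel K) a b → q a = q b := by
    intro a b hab
    rw [QuotientAddGroup.leftRel_apply] at hab
    have h1 : q (-a + b) = 0 := AddMonoidHom.mem_ker.1 hab
    rw [hqadd, hqneg] at h1
    have h2 : -(q a) + q b = 0 := h1
    have h3 := neg_add_eq_zero.1 h2
    exact h3
  set eb : (((Fin m → ℝ) × (Fin n → ℝ)) ⧸ K) → ((Fin m → ℝ) × (Fin n → AddCircle (1:ℝ))) :=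
    Quotient.lift q hcompatK with heb
  have hebc : Continuous eb := hqc.quotient_lift hcompatK
  have hebsurj : Function.Surjective eb := by
    intro x
    obtain ⟨g, rfl⟩ := hqs x
    exact ⟨QuotientAddGroup.mk g, rfl⟩
  have hebinj : Function.Injective eb := by
    intro a b
    refine Quotient.inductionOn₂ a b ?_
    intro a b hab
    have h1 : q a = q b := hab
    apply Quotient.sound
    apply QuotientAddGroup.leftRel_apply.2
    apply AddMonoidHom.mem_ker.2
    show q (-a + b) = 0
    rw [hqadd, hqneg]
    show -(q a) + q b = 0
    rw [h1, neg_add_cancel]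
  have hebopen : IsOpenMap eb := by
    intro U hU
    have h1 : eb '' U = q '' (QuotientAddGroup.mk ⁻¹' U) := by
      ext x
      constructor
      · rintro ⟨u, hu, rfl⟩
        obtain ⟨a, rfl⟩ := Quotient.exists_rep u
        exact ⟨a, hu, rfl⟩
      · rintro ⟨a, ha, rfl⟩
        exact ⟨QuotientAddGroup.mk a, ha, rfl⟩
    rw [h1]
    exact hqo _ (hU.preimage continuous_quotient_mk')
  set eB : (((Fin m → ℝ) × (Fin n → ℝ)) ⧸ K) ≃ₜ ((Fin m → ℝ) × (Fin n → AddCircle (1:ℝ))) :=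
    Equiv.toHomeomorphOfContinuousOpen (Equiv.ofBijective eb ⟨hebinj, hebsurj⟩) hebc hebopen
    with heB
  -- middle homeomorphism G ⧸ K ≃ₜ G ⧸ Γ
  have hcompatL : ∀ a b, (QuotientAddGroup.leftRel K) a b →
      (QuotientAddGroup.mk (L a) : ((Fin m → ℝ) × (Fin n → ℝ)) ⧸ Γ) =
        QuotientAddGroup.mk (L b) := by
    intro a b hab
    rw [QuotientAddGroup.leftRel_apply] at hab
    apply Quotient.sound
    apply QuotientAddGroup.leftRel_apply.2
    have h1 : L (-a + b) ∈ Γ := (hLK _).1 hab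
    rwa [map_add, map_neg] at h1
  have hcompatL' : ∀ a b, (QuotientAddGroup.leftRel Γ) a b →
      (QuotientAddGroup.mk (L.symm a) : ((Fin m → ℝ) × (Fin n → ℝ)) ⧸ K) =
        QuotientAddGroup.mk (L.symm b) := by
    intro a b hab
    rw [QuotientAddGroup.leftRel_apply] at hab
    apply Quotient.sound
    apply QuotientAddGroup.leftRel_apply.2
    have h1 : L (L.symm (-a + b)) ∈ Γ := by
      rw [L.apply_symm_apply]
      exact hab
    have h2 := (hLK (L.symm (-a + b))).2 h1
    rwa [map_add, map_neg] at h2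
  set eM : (((Fin m → ℝ) × (Fin n → ℝ)) ⧸ K) ≃ₜ (((Fin m → ℝ) × (Fin n → ℝ)) ⧸ Γ) :=
    { toFun := Quotient.lift
        (fun g => (QuotientAddGroup.mk (L g) : ((Fin m → ℝ) × (Fin n → ℝ)) ⧸ Γ)) hcompatL
      invFun := Quotient.lift
        (fun g => (QuotientAddGroup.mk (L.symm g) : ((Fin m → ℝ) × (Fin n → ℝ)) ⧸ K)) hcompatL'
      left_inv := by
        refine Quotient.ind ?_
        intro a
        show QuotientAddGroup.mk (L.symm (L a)) = _
        rw [L.symm_apply_apply]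
      right_inv := by
        refine Quotient.ind ?_
        intro a
        show QuotientAddGroup.mk (L (L.symm a)) = _
        rw [L.apply_symm_apply]
      continuous_toFun := Continuous.quotient_lift (continuous_quotient_mk'.comp hLc) _
      continuous_invFun := Continuous.quotient_lift (continuous_quotient_mk'.comp hLsymc) _ }
    with heM
  exact ⟨eX.symm.trans (eM.symm.trans eB)⟩
end
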